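/- Let E > 0 and φ ∈ ℝ with cos(2φ) ≠ 0, so that the curve c(θ) = (E·cos(θ−φ), sin(θ+φ)) never vanishes. Let G : ℝ → ℝ be a differentiable function such that for every θ there exists ρ(θ) > 0 with c(θ) = ρ(θ)·(cos G(θ), sin G(θ)). Then for every θ ∈ ℝ, G′(θ) = E·cos(2φ) / (E²·cos²(θ−φ) + sin²(θ+φ)). -/

import Mathlib

open Real

/-- A differentiable angle lift `G` of the curve
`θ ↦ (E cos (θ−φ), sin (θ+φ))` (`E > 0`, `cos 2φ ≠ 0`) satisfies
`G′(θ) = E cos 2φ / (E² cos² (θ−φ) + sin² (θ+φ))`. -/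
theorem deriv_angle_lift_node_curve (E φ : ℝ) (hE : 0 < E) (hφ : cos (2 * φ) ≠ 0)
    (G : ℝ → ℝ) (hG : Differentiable ℝ G)
    (hlift : ∀ θ : ℝ, ∃ ρ > 0,
      E * cos (θ - φ) = ρ * cos (G θ) ∧ sin (θ + φ) = ρ * sin (G θ)) :
    ∀ θ : ℝ, deriv G θ
      = E * cos (2 * φ) / (E ^ 2 * cos (θ - φ) ^ 2 + sin (θ + φ) ^ 2) := by
  intro θ
  obtain ⟨ρ, hρ, h1, h2⟩ := hlift θ
  set g := deriv G θ with hg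
  have hG' : HasDerivAt G g θ := (hG θ).hasDerivAt
  have hd : HasDerivAt (fun x => E * cos (x - φ) * sin (G x) - sin (x + φ) * cos (G x))
      ((E * (-sin (θ - φ)) * sin (G θ) + E * cos (θ - φ) * (cos (G θ) * g))
        - (cos (θ + φ) * cos (G θ) + sin (θ + φ) * (-sin (G θ) * g))) θ := by
    have ha : HasDerivAt (fun x : ℝ => x - φ) 1 θ := (hasDerivAt_id θ).sub_const φ
    have hb : HasDerivAt (fun x : ℝ => x + φ) 1 θ := (hasDerivAt_id θ).add_const φ
    have hc : HasDerivAt (fun x => cos (x - φ)) (-sin (θ - φ)) θ := by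
      have := (Real.hasDerivAt_cos (θ - φ)).comp θ ha
      simp only [mul_one] at this
      exact this
    have hs : HasDerivAt (fun x => sin (x + φ)) (cos (θ + φ)) θ := by
      have := (Real.hasDerivAt_sin (θ + φ)).comp θ hb
      simp only [mul_one] at this
      exact this
    have hsg : HasDerivAt (fun x => sin (G x)) (cos (G θ) * g) θ :=
      (Real.hasDerivAt_sin (G θ)).comp θ hG'
    have hcg : HasDerivAt (fun x => cos (G x)) (-sin (G θ) * g) θ :=
      (Real.hasDerivAt_cos (G θ)).comp θ hG'
    have := ((hc.const_mul E).mul hsg).sub (hs.mul hcg)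
    exact this
  have hzero : HasDerivAt (fun x => E * cos (x - φ) * sin (G x) - sin (x + φ) * cos (G x))
      0 θ := by
    have hF : (fun x => E * cos (x - φ) * sin (G x) - sin (x + φ) * cos (G x))
        = fun _ => (0 : ℝ) := by
      funext x
      obtain ⟨r, hr, e1, e2⟩ := hlift x
      rw [e1, e2]; ring
    rw [hF]
    exact hasDerivAt_const θ 0
  have heq := hd.unique hzero
  have hpyth : sin (G θ) ^ 2 + cos (G θ) ^ 2 = 1 := sin_sq_add_cos_sq _
  have hρ2 : E ^ 2 * cos (θ - φ) ^ 2 + sin (θ + φ) ^ 2 = ρ ^ 2 := by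
    have : (E * cos (θ - φ)) ^ 2 + sin (θ + φ) ^ 2 = ρ ^ 2 := by
      rw [h1, h2]; nlinarith [hpyth]
    nlinarith [this]
  have hcos2 : cos (2 * φ) = cos (θ + φ) * cos (θ - φ) + sin (θ + φ) * sin (θ - φ) := by
    have h := Real.cos_sub (θ + φ) (θ - φ)
    rw [show θ + φ - (θ - φ) = 2 * φ by ring] at h
    exact h
  have key : g * ρ = E * sin (θ - φ) * sin (G θ) + cos (θ + φ) * cos (G θ) := by
    linear_combination heq - cos (G θ) * g * h1 - sin (G θ) * g * h2 - g * ρ * hpyth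
  have hgρ : g * ρ ^ 2 = E * cos (2 * φ) := by
    rw [hcos2]
    linear_combination ρ * key - E * sin (θ - φ) * h2 - cos (θ + φ) * h1
  rw [hρ2, eq_div_iff (by positivity : (ρ : ℝ) ^ 2 ≠ 0)]
  linarith [hgρ]
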